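/- Let Φ, Ψ : [0,∞) → [0,∞) be Young functions and C > 0. If ‖f‖_{wL_Φ} ≤ C·‖f‖_{wL_Ψ} holds for every measurable f : ℝⁿ → ℝ with ‖f‖_{wL_Ψ} < ∞, then Φ(t) ≤ Ψ(Ct) for every t > 0. -/

import Mathlib

open MeasureTheory Filter Set
open scoped ENNReal Topology

/-- A Young function: convex on `[0,∞)`, left-continuous, `Φ 0 = 0`,
`Φ t → ∞` as `t → ∞`, and taking values in `[0,∞)`. -/
def IsYoungFunction (Φ : ℝ → ℝ) : Prop :=
  ConvexOn ℝ (Set.Ici 0) Φ ∧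
  (∀ t : ℝ, 0 ≤ t → ContinuousWithinAt Φ (Set.Iic t) t) ∧
  Φ 0 = 0 ∧
  Tendsto Φ atTop atTop ∧
  ∀ t : ℝ, 0 ≤ t → 0 ≤ Φ t

/-- Generalized inverse `Φ⁻¹(s) = inf {r ≥ 0 : Φ r > s}`. -/
noncomputable def youngInv (Φ : ℝ → ℝ) (s : ℝ) : ℝ :=
  sInf {r : ℝ | 0 ≤ r ∧ s < Φ r}

/-- The weak Orlicz quasi-norm of `f` on `ℝⁿ`, valued in `ℝ≥0∞`. -/
noncomputable def wLuxNorm {n : ℕ} (Φ : ℝ → ℝ) (f : EuclideanSpace ℝ (Fin n) → ℝ) : ℝ≥0∞ :=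
  sInf (ENNReal.ofReal ''
    {b : ℝ | 0 < b ∧
      ∀ t : ℝ, 0 < t → ENNReal.ofReal (Φ t) * volume {x | t < |f x| / b} ≤ 1})

lemma young_mono' {Φ : ℝ → ℝ} (hΦ : ConvexOn ℝ (Set.Ici 0) Φ) (h0 : Φ 0 = 0)
    (hnn : ∀ t : ℝ, 0 ≤ t → 0 ≤ Φ t) {s u : ℝ} (hs : 0 ≤ s) (hsu : s ≤ u) :
    Φ s ≤ Φ u := by
  have hu : 0 ≤ u := hs.trans hsu
  have hseg : s ∈ segment ℝ (0:ℝ) u := by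
    rw [segment_eq_Icc hu]; exact ⟨hs, hsu⟩
  have := hΦ.le_on_segment (Set.self_mem_Ici) (Set.mem_Ici.mpr hu) hseg
  rw [h0] at this
  exact this.trans (max_le (hnn u hu) le_rfl)

lemma exists_volume_eq {n : ℕ} (hn : 0 < n) {a : ℝ} (ha : 0 < a) :
    ∃ E : Set (EuclideanSpace ℝ (Fin n)), MeasurableSet E ∧ volume E = ENNReal.ofReal a := by
  set c := (volume (Metric.ball (0 : EuclideanSpace ℝ (Fin n)) 1)).toReal with hc
  have hcpos : 0 < c :=
    ENNReal.toReal_pos (Metric.measure_ball_pos volume 0 one_pos).ne' measure_ball_lt_top.ne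
  have hcfin : volume (Metric.ball (0 : EuclideanSpace ℝ (Fin n)) 1) = ENNReal.ofReal c :=
    (ENNReal.ofReal_toReal measure_ball_lt_top.ne).symm
  set r := (a / c) ^ ((n : ℝ)⁻¹) with hr
  have hrpos : 0 < r := Real.rpow_pos_of_pos (div_pos ha hcpos) _
  refine ⟨Metric.ball 0 r, measurableSet_ball, ?_⟩
  rw [Measure.addHaar_ball_of_pos volume 0 hrpos, hcfin, finrank_euclideanSpace_fin,
    ← ENNReal.ofReal_mul (by positivity)]
  congr 1
  have hpow : r ^ n = a / c :=
    Real.rpow_inv_natCast_pow (div_pos ha hcpos).le hn.ne'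
  rw [hpow, div_mul_cancel₀ _ hcpos.ne']

theorem young_le_of_wLuxNorm_le {n : ℕ} (hn : 0 < n) (Φ Ψ : ℝ → ℝ)
    (hΦ : IsYoungFunction Φ) (hΨ : IsYoungFunction Ψ) (C : ℝ) (hC : 0 < C)
    (h : ∀ f : EuclideanSpace ℝ (Fin n) → ℝ, Measurable f → wLuxNorm Ψ f < ⊤ →
      wLuxNorm Φ f ≤ ENNReal.ofReal C * wLuxNorm Ψ f) :
    ∀ t : ℝ, 0 < t → Φ t ≤ Ψ (C * t) := by
  intro t ht
  obtain ⟨hΦc, hΦlc, hΦ0, -, hΦnn⟩ := hΦ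
  obtain ⟨hΨc, -, hΨ0, -, hΨnn⟩ := hΨ
  have hCt : 0 < C * t := mul_pos hC ht
  -- Key step: for every a > 0 with Ψ(Ct)·a ≤ 1, we get Φ(t)·a ≤ 1.
  have key : ∀ a : ℝ, 0 < a → Ψ (C * t) * a ≤ 1 → Φ t * a ≤ 1 := by
    intro a ha hΨa
    obtain ⟨E, hE, hEvol⟩ := exists_volume_eq hn ha
    set f : EuclideanSpace ℝ (Fin n) → ℝ := E.indicator (fun _ => C * t) with hf
    have hfm : Measurable f := (measurable_const.indicator hE)
    -- level sets of f
    have hset : ∀ b s : ℝ, 0 < s →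
        {x | s < |f x| / b} = if s < C * t / b then E else (∅ : Set _) := by
      intro b s hs
      ext x
      by_cases hx : x ∈ E
      · simp [hf, Set.indicator_of_mem hx, abs_of_pos hCt, hx]
      · simp [hf, Set.indicator_of_notMem hx, hx, hs.not_gt, not_lt.mpr hs.le]
    -- Ψ-norm of f is at most 1
    have hΨnorm : wLuxNorm Ψ f ≤ 1 := by
      have hmem : (1 : ℝ≥0∞) ∈ ENNReal.ofReal ''
          {b : ℝ | 0 < b ∧
            ∀ s : ℝ, 0 < s → ENNReal.ofReal (Ψ s) * volume {x | s < |f x| / b} ≤ 1} := by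
        refine ⟨1, ⟨one_pos, ?_⟩, ENNReal.ofReal_one⟩
        intro s hs
        rw [hset 1 s hs]
        split_ifs with hlt
        · rw [div_one] at hlt
          rw [hEvol, ← ENNReal.ofReal_mul (hΨnn s hs.le)]
          refine le_trans (ENNReal.ofReal_le_ofReal ?_) (ENNReal.ofReal_le_one.mpr hΨa)
          exact mul_le_mul_of_nonneg_right
            (young_mono' hΨc hΨ0 hΨnn hs.le hlt.le) ha.le
        · simp
      exact sInf_le hmem
    have hfin : wLuxNorm Ψ f < ⊤ := lt_of_le_of_lt hΨnorm (by simp)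
    have hΦnorm : wLuxNorm Φ f ≤ ENNReal.ofReal C := by
      calc wLuxNorm Φ f ≤ ENNReal.ofReal C * wLuxNorm Ψ f := h f hfm hfin
        _ ≤ ENNReal.ofReal C * 1 := by gcongr
        _ = ENNReal.ofReal C := mul_one _
    -- From the Φ-norm bound, deduce Φ(s)·a ≤ 1 for all 0 < s < t.
    have hstep : ∀ s : ℝ, 0 < s → s < t → Φ s * a ≤ 1 := by
      intro s hs hst
      set ε : ℝ := C * (t - s) / s with hε
      have hεpos : 0 < ε := div_pos (mul_pos hC (by linarith)) hs
      have hlt : wLuxNorm Φ f < ENNReal.ofReal (C + ε) :=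
        lt_of_le_of_lt hΦnorm (by
          exact_mod_cast ENNReal.ofReal_lt_ofReal_iff (by linarith) |>.mpr (by linarith))
      rw [wLuxNorm, sInf_lt_iff] at hlt
      obtain ⟨y, ⟨b, ⟨hb, hcond⟩, rfl⟩, hyb⟩ := hlt
      have hbC : b < C + ε := by
        have := (ENNReal.ofReal_lt_ofReal_iff (by linarith)).mp hyb
        linarith
      have hsCt : s < C * t / b := by
        have h1 : s * (C + ε) = C * t := by
          field_simp [hε]
          rw [hε, mul_add, mul_div_assoc', mul_div_cancel_left₀ _ hs.ne']; ring
        rw [lt_div_iff₀ hb]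
        calc s * b < s * (C + ε) := by nlinarith
          _ = C * t := h1
      have := hcond s hs
      rw [hset b s hs, if_pos hsCt, hEvol, ← ENNReal.ofReal_mul (hΦnn s hs.le)] at this
      exact ENNReal.ofReal_le_one.mp this
    -- left-continuity of Φ at t
    have htend : Tendsto (fun s => Φ s * a) (𝓝[<] t) (𝓝 (Φ t * a)) := by
      have := (hΦlc t ht.le).tendsto.mono_left (nhdsWithin_mono t Set.Iio_subset_Iic_self)
      exact this.mul_const a
    have hev : ∀ᶠ s in 𝓝[<] t, Φ s * a ≤ 1 := by
      filter_upwards [Ioo_mem_nhdsLT_of_mem (Set.mem_Ioc.mpr ⟨ht, le_rfl⟩)] with s hs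
      exact hstep s hs.1 hs.2
    exact le_of_tendsto htend hev
  -- conclude
  rcases lt_or_eq_of_le (hΨnn (C * t) hCt.le) with hpos | hzero
  · have := key (Ψ (C * t))⁻¹ (inv_pos.mpr hpos) (by
      rw [mul_inv_cancel₀ hpos.ne'])
    calc Φ t = Φ t * (Ψ (C*t))⁻¹ * Ψ (C*t) := by field_simp
      _ ≤ 1 * Ψ (C * t) := by
          exact mul_le_mul_of_nonneg_right this hpos.le
      _ = Ψ (C * t) := one_mul _
  · rw [← hzero]
    by_contra hlt
    push_neg at hlt
    have hΦt : 0 < Φ t := hlt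
    have := key (2 / Φ t) (by positivity) (by rw [← hzero]; simp)
    have h2 : Φ t * (2 / Φ t) = 2 := by field_simp
    linarith
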